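/- Let M be a special local Moufang set and let x be a unit such that x·2 := x·α_x is also a unit. Then: (1) there exists a unique y ∈ X with y·2 = x; (2) (xτ)·2 is not equivalent to 0; (3) ((x·2)τ)·2 = xτ, where τ is a fixed μ-map. -/

import Mathlib

open Equiv

structure LocalMoufangSet (X : Type*) where
  r : X → X → Prop
  requiv : Equivalence r
  U : X → Subgroup (Equiv.Perm X)
  preserves : ∀ x : X, ∀ u ∈ U x, ∀ a b : X, r a b ↔ r (u a) (u b)
  big : ∃ a b c : X, ¬ r a b ∧ ¬ r b c ∧ ¬ r a c
  lm1 : ∀ x y : X, r x y → ∀ u ∈ U x, ∃ v ∈ U y, ∀ z : X, r (u z) (v z)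
  lm2_fix : ∀ x : X, ∀ u ∈ U x, u x = x
  lm2_trans : ∀ x y z : X, ¬ r y x → ¬ r z x → ∃! u : Equiv.Perm X, u ∈ U x ∧ u y = z
  lm2'_trans : ∀ x y z : X, ¬ r y x → ¬ r z x → ∃ u ∈ U x, r (u y) z
  lm2'_free : ∀ x : X, ∀ u ∈ U x, ∀ y : X, ¬ r y x → r (u y) y → ∀ z : X, r (u z) z
  lm3 : ∀ x : X, ∀ g ∈ (⨆ y : X, U y : Subgroup (Equiv.Perm X)),
      (U x).map (MulAut.conj g).toMonoidHom = U (g x)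

namespace LocalMoufangSet

variable {X : Type*} (M : LocalMoufangSet X)

/-- The little projective group. -/
def G : Subgroup (Equiv.Perm X) := ⨆ x : X, M.U x

/-- `x` is a unit with respect to the base points `o` (zero) and `ι` (infinity). -/
def IsUnitPt (o ι x : X) : Prop := ¬ M.r x o ∧ ¬ M.r x ι

/-- `μ` is the μ-map of `x`: it lies in the double coset `U_0 α_x U_0` and swaps `o` and `ι`.
(We use the left-action convention: a right product `g α h` corresponds to `h * α * g`.) -/
def IsMuMap (o ι x : X) (μ : Equiv.Perm X) : Prop :=
  μ o = ι ∧ μ ι = o ∧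
    ∃ a ∈ M.U ι, a o = x ∧ ∃ g ∈ M.U o, ∃ h ∈ M.U o, μ = h * a * g

/-- Specialness with respect to a μ-map `τ`: `(-x)τ = -(xτ)` for all units `x`. -/
def Special (o ι : X) (τ : Equiv.Perm X) : Prop :=
  ∀ z : X, IsUnitPt M o ι z → ∀ a ∈ M.U ι, a o = z → ∀ b ∈ M.U ι, b o = τ z →
    τ (a⁻¹ o) = b⁻¹ o

end LocalMoufangSet


theorem Equiv.Perm.inv_apply_self {X : Type*} (f : Equiv.Perm X) (x : X) : f⁻¹ (f x) = x :=
  f.symm_apply_apply x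

theorem Equiv.Perm.apply_inv_self {X : Type*} (f : Equiv.Perm X) (x : X) : f (f⁻¹ x) = x :=
  f.apply_symm_apply x

section Helpers

theorem perm_inv_fix {X : Type*} {σ : Equiv.Perm X} {x : X} (h : σ x = x) : σ⁻¹ x = x := by
  conv_lhs => rw [← h]
  exact Equiv.Perm.inv_apply_self σ x

theorem perm_inv_apply {X : Type*} {σ : Equiv.Perm X} {p q : X} (h : σ p = q) : σ⁻¹ q = p := by
  rw [← h]
  exact Equiv.Perm.inv_apply_self σ p

end Helpers

namespace LocalMoufangSet

variable {X : Type*} (M : LocalMoufangSet X)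

theorem rsymm {a b : X} (h : M.r a b) : M.r b a := M.requiv.symm h

theorem U_le_G (x : X) : M.U x ≤ M.G := le_iSup M.U x

theorem presG {g : Perm X} (hg : g ∈ M.G) (a b : X) : M.r (g a) (g b) ↔ M.r a b := by
  let K : Subgroup (Perm X) :=
  { carrier := {g : Perm X | ∀ a b : X, M.r (g a) (g b) ↔ M.r a b}
    one_mem' := by intro a b; simp
    mul_mem' := by
      intro f h hf hh a b
      simp only [Set.mem_setOf_eq] at hf hh ⊢
      rw [Perm.mul_apply, Perm.mul_apply]
      exact (hf _ _).trans (hh a b)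
    inv_mem' := by
      intro f hf a b
      simp only [Set.mem_setOf_eq] at hf ⊢
      have := hf (f⁻¹ a) (f⁻¹ b)
      rw [Perm.apply_inv_self, Perm.apply_inv_self] at this
      exact this.symm }
  have hK : M.G ≤ K := iSup_le (fun x u hu => (fun a b => (M.preserves x u hu a b).symm))
  exact hK hg a b

theorem conj_mem {g u : Perm X} {P : X} (hg : g ∈ M.G) (hu : u ∈ M.U P) :
    g * u * g⁻¹ ∈ M.U (g P) := by
  rw [← M.lm3 P g hg]
  exact Subgroup.mem_map.mpr ⟨u, hu, rfl⟩

noncomputable def aM (O I z : X) : Perm X :=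
  Classical.epsilon (fun u : Perm X => u ∈ M.U I ∧ u O = z)

theorem aM_spec {O I z : X} (h1 : ¬M.r O I) (h2 : ¬M.r z I) :
    M.aM O I z ∈ M.U I ∧ M.aM O I z O = z :=
  Classical.epsilon_spec (p := fun u : Perm X => u ∈ M.U I ∧ u O = z)
    ⟨(M.lm2_trans I O z h1 h2).choose, (M.lm2_trans I O z h1 h2).choose_spec.1⟩

theorem aM_mem {O I z : X} (h1 : ¬M.r O I) (h2 : ¬M.r z I) : M.aM O I z ∈ M.U I :=
  (M.aM_spec h1 h2).1

theorem aM_apply {O I z : X} (h1 : ¬M.r O I) (h2 : ¬M.r z I) : M.aM O I z O = z :=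
  (M.aM_spec h1 h2).2

theorem aM_eq {O I z : X} (h1 : ¬M.r O I) (h2 : ¬M.r z I) {u : Perm X}
    (hU : u ∈ M.U I) (ho : u O = z) : u = M.aM O I z := by
  have h := M.lm2_trans I O z h1 h2
  exact h.unique ⟨hU, ho⟩ ⟨M.aM_mem h1 h2, M.aM_apply h1 h2⟩

theorem aM_G {O I z : X} (h1 : ¬M.r O I) (h2 : ¬M.r z I) : M.aM O I z ∈ M.G :=
  M.U_le_G I (M.aM_mem h1 h2)

theorem aM_fix {O I z : X} (h1 : ¬M.r O I) (h2 : ¬M.r z I) : M.aM O I z I = I :=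
  M.lm2_fix I _ (M.aM_mem h1 h2)

theorem conj_aM {g : Perm X} (hg : g ∈ M.G) {O I z : X} (h1 : ¬M.r O I) (h2 : ¬M.r z I) :
    g * M.aM O I z * g⁻¹ = M.aM (g O) (g I) (g z) := by
  apply M.aM_eq
  · intro h; exact h1 ((M.presG hg O I).mp h)
  · intro h; exact h2 ((M.presG hg z I).mp h)
  · exact M.conj_mem hg (M.aM_mem h1 h2)
  · simp only [Perm.mul_apply, Perm.inv_apply_self]
    rw [M.aM_apply h1 h2]

noncomputable def ng (O I z : X) : X := (M.aM O I z)⁻¹ O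

theorem ng_def (O I z : X) : M.ng O I z = (M.aM O I z)⁻¹ O := rfl

theorem ng_nI {O I z : X} (h1 : ¬M.r O I) (h2 : ¬M.r z I) : ¬M.r (M.ng O I z) I := by
  intro h
  have hfix : (M.aM O I z)⁻¹ I = I := perm_inv_fix (M.aM_fix h1 h2)
  have h' : M.r ((M.aM O I z)⁻¹ O) ((M.aM O I z)⁻¹ I) := by rw [hfix]; exact h
  exact h1 ((M.presG (inv_mem (M.aM_G h1 h2)) O I).mp h')

theorem ng_nO {O I z : X} (h1 : ¬M.r O I) (hz1 : ¬M.r z O) (h2 : ¬M.r z I) :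
    ¬M.r (M.ng O I z) O := by
  intro h
  have h' := (M.presG (M.aM_G h1 h2) _ _).mpr h
  rw [M.ng_def, Perm.apply_inv_self, M.aM_apply h1 h2] at h'
  exact hz1 (M.rsymm h')

theorem aM_ng {O I z : X} (h1 : ¬M.r O I) (h2 : ¬M.r z I) :
    M.aM O I (M.ng O I z) = (M.aM O I z)⁻¹ :=
  (M.aM_eq h1 (M.ng_nI h1 h2) (inv_mem (M.aM_mem h1 h2)) rfl).symm


section Gen

variable {O I : X} {θ : Perm X}

theorem unit_map (hθG : θ ∈ M.G) (hθO : θ O = I) (hθI : θ I = O) {z : X}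
    (hz1 : ¬M.r z O) (hz2 : ¬M.r z I) : ¬M.r (θ z) O ∧ ¬M.r (θ z) I := by
  constructor
  · intro h
    rw [← hθI] at h
    exact hz2 ((M.presG hθG z I).mp h)
  · intro h
    rw [← hθO] at h
    exact hz1 ((M.presG hθG z O).mp h)

theorem bform (hOI : ¬M.r O I) (hθG : θ ∈ M.G) (hθO : θ O = I) (hθI : θ I = O)
    {u : X} (hu1 : ¬M.r u O) (hu2 : ¬M.r u I) :
    M.aM I O u = θ * M.aM O I (θ⁻¹ u) * θ⁻¹ := by
  have hθiG : θ⁻¹ ∈ M.G := inv_mem hθG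
  have hθiO : θ⁻¹ O = I := by rw [← hθI, Perm.inv_apply_self]
  have hθiI : θ⁻¹ I = O := by rw [← hθO, Perm.inv_apply_self]
  obtain ⟨hu'1, hu'2⟩ := M.unit_map hθiG hθiO hθiI hu1 hu2
  have h := M.conj_aM hθG hOI hu'2
  rw [hθO, hθI, Perm.apply_inv_self] at h
  exact h.symm

theorem negb (hOI : ¬M.r O I) (hθG : θ ∈ M.G) (hθO : θ O = I) (hθI : θ I = O)
    (hspec : ∀ z : X, ¬M.r z O → ¬M.r z I → θ (M.ng O I z) = M.ng O I (θ z))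
    {u : X} (hu1 : ¬M.r u O) (hu2 : ¬M.r u I) :
    (M.aM I O u)⁻¹ I = M.ng O I u := by
  have hθiG : θ⁻¹ ∈ M.G := inv_mem hθG
  have hθiO : θ⁻¹ O = I := by rw [← hθI, Perm.inv_apply_self]
  have hθiI : θ⁻¹ I = O := by rw [← hθO, Perm.inv_apply_self]
  obtain ⟨hu'1, hu'2⟩ := M.unit_map hθiG hθiO hθiI hu1 hu2
  rw [M.bform hOI hθG hθO hθI hu1 hu2]
  have hrw : (θ * M.aM O I (θ⁻¹ u) * θ⁻¹)⁻¹ = θ * (M.aM O I (θ⁻¹ u))⁻¹ * θ⁻¹ := by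
    simp [mul_inv_rev, mul_assoc]
  rw [hrw]
  simp only [Perm.mul_apply]
  rw [hθiI]
  rw [← M.ng_def, hspec _ hu'1 hu'2, Perm.apply_inv_self]

theorem binv (hOI : ¬M.r O I) (hIO : ¬M.r I O) (hθG : θ ∈ M.G) (hθO : θ O = I) (hθI : θ I = O)
    (hspec : ∀ z : X, ¬M.r z O → ¬M.r z I → θ (M.ng O I z) = M.ng O I (θ z))
    {u : X} (hu1 : ¬M.r u O) (hu2 : ¬M.r u I) :
    (M.aM I O u)⁻¹ = M.aM I O (M.ng O I u) :=
  M.aM_eq hIO (M.ng_nO hOI hu1 hu2) (inv_mem (M.aM_mem hIO hu1))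
    (M.negb hOI hθG hθO hθI hspec hu1 hu2)

theorem two_gen (hOI : ¬M.r O I) (hIO : ¬M.r I O) (hθG : θ ∈ M.G) (hθO : θ O = I)
    (hθI : θ I = O)
    (hspec : ∀ z : X, ¬M.r z O → ¬M.r z I → θ (M.ng O I z) = M.ng O I (θ z))
    {x : X} (hx1 : ¬M.r x O) (hx2 : ¬M.r x I) (hs1 : ¬M.r (M.aM O I x x) O) :
    ¬M.r (M.aM O I (θ x) (θ x)) O ∧ ¬M.r (M.aM O I (θ x) (θ x)) I := by
  obtain ⟨hw1, hw2⟩ := M.unit_map hθG hθO hθI hx1 hx2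
  have haxG : M.aM O I x ∈ M.G := M.aM_G hOI hx2
  have hbxG : M.aM I O x ∈ M.G := M.aM_G hIO hx1
  have hσG : (M.aM I O x)⁻¹ * M.aM O I x * (M.aM I O x)⁻¹ ∈ M.G :=
    mul_mem (mul_mem (inv_mem hbxG) haxG) (inv_mem hbxG)
  have hbxi : (M.aM I O x)⁻¹ x = I := perm_inv_apply (M.aM_apply hIO hx1)
  have hbxO : (M.aM I O x)⁻¹ O = O := perm_inv_fix (M.aM_fix hIO hx1)
  have hσO : ((M.aM I O x)⁻¹ * M.aM O I x * (M.aM I O x)⁻¹) O = I := by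
    simp only [Perm.mul_apply]
    rw [hbxO, M.aM_apply hOI hx2, hbxi]
  have hσI : ((M.aM I O x)⁻¹ * M.aM O I x * (M.aM I O x)⁻¹) I = O := by
    simp only [Perm.mul_apply]
    rw [M.negb hOI hθG hθO hθI hspec hx1 hx2, M.ng_def, Perm.apply_inv_self, hbxO]
  have hσx : ((M.aM I O x)⁻¹ * M.aM O I x * (M.aM I O x)⁻¹) x = M.ng O I x := by
    simp only [Perm.mul_apply]
    rw [hbxi, M.aM_fix hOI hx2, M.negb hOI hθG hθO hθI hspec hx1 hx2]
  set σ : Perm X := (M.aM I O x)⁻¹ * M.aM O I x * (M.aM I O x)⁻¹ with hσdef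
  have hHG : θ * σ ∈ M.G := mul_mem hθG hσG
  have hHO : (θ * σ) O = O := by rw [Perm.mul_apply, hσO, hθI]
  have hHI : (θ * σ) I = I := by rw [Perm.mul_apply, hσI, hθO]
  have hHx : (θ * σ) x = M.ng O I (θ x) := by
    rw [Perm.mul_apply, hσx, hspec x hx1 hx2]
  have hiO : (θ * σ)⁻¹ O = O := perm_inv_fix hHO
  have hθiG : θ⁻¹ ∈ M.G := inv_mem hθG
  have hθiO : θ⁻¹ O = I := by rw [← hθI, Perm.inv_apply_self]
  have hC : (θ * σ) * M.aM O I x * (θ * σ)⁻¹ = (M.aM O I (θ x))⁻¹ := by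
    rw [M.conj_aM hHG hOI hx2, hHO, hHI, hHx, M.aM_ng hOI hw2]
  have h5 : (M.aM O I (θ x))⁻¹ * (M.aM O I (θ x))⁻¹
      = (θ * σ) * (M.aM O I x * M.aM O I x) * (θ * σ)⁻¹ := by
    rw [← hC]; group
  have hkey : (M.aM O I (θ x))⁻¹ ((M.aM O I (θ x))⁻¹ O) = θ (σ (M.aM O I x x)) := by
    have h6 := congrArg (fun f : Perm X => f O) h5
    simp only [Perm.mul_apply] at h6
    rw [show (θ * σ)⁻¹ O = O from hiO, M.aM_apply hOI hx2] at h6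
    exact h6
  have hAAG : M.aM O I (θ x) * M.aM O I (θ x) ∈ M.G :=
    mul_mem (M.aM_G hOI hw2) (M.aM_G hOI hw2)
  have hAw : M.aM O I (θ x) (θ x) = (M.aM O I (θ x) * M.aM O I (θ x)) O := by
    rw [Perm.mul_apply, M.aM_apply hOI hw2]
  constructor
  · intro hcon
    rw [hAw] at hcon
    have e2 := (M.presG (inv_mem hAAG) _ _).mpr hcon
    rw [Perm.inv_apply_self] at e2
    have e3 : (M.aM O I (θ x) * M.aM O I (θ x))⁻¹ O = θ (σ (M.aM O I x x)) := by
      rw [mul_inv_rev, Perm.mul_apply]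
      exact hkey
    rw [e3] at e2
    have e4 := (M.presG hθiG O (θ (σ (M.aM O I x x)))).mpr e2
    rw [hθiO, Perm.inv_apply_self] at e4
    have e5 := (M.presG (inv_mem hσG) I (σ (M.aM O I x x))).mpr e4
    rw [perm_inv_apply hσO, Perm.inv_apply_self] at e5
    exact hs1 (M.rsymm e5)
  · intro hcon
    have hAAI : (M.aM O I (θ x) * M.aM O I (θ x)) I = I := by
      rw [Perm.mul_apply, M.aM_fix hOI hw2, M.aM_fix hOI hw2]
    have hcon2 : M.r ((M.aM O I (θ x) * M.aM O I (θ x)) O)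
        ((M.aM O I (θ x) * M.aM O I (θ x)) I) := by
      rw [hAAI, ← hAw]; exact hcon
    exact hOI ((M.presG hAAG O I).mp hcon2)

theorem ML_gen (hOI : ¬M.r O I) (hIO : ¬M.r I O) (hθG : θ ∈ M.G) (hθO : θ O = I)
    (hθI : θ I = O)
    (hspec : ∀ z : X, ¬M.r z O → ¬M.r z I → θ (M.ng O I z) = M.ng O I (θ z))
    {u : X} (hu1 : ¬M.r u O) (hu2 : ¬M.r u I)
    (hv2 : ¬M.r (M.aM I O u u) I) :
    M.aM O I (M.aM I O u u) (M.aM I O u u) = u := by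
  have hAG : M.aM O I u ∈ M.G := M.aM_G hOI hu2
  have hBG : M.aM I O u ∈ M.G := M.aM_G hIO hu1
  have hAO : M.aM O I u O = u := M.aM_apply hOI hu2
  have hAI : M.aM O I u I = I := M.aM_fix hOI hu2
  have hBI : M.aM I O u I = u := M.aM_apply hIO hu1
  have hBO : M.aM I O u O = O := M.aM_fix hIO hu1
  have hAiu : (M.aM O I u)⁻¹ u = O := perm_inv_apply hAO
  have hAiI : (M.aM O I u)⁻¹ I = I := perm_inv_fix hAI
  have hBiu : (M.aM I O u)⁻¹ u = I := perm_inv_apply hBI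
  have hBiO : (M.aM I O u)⁻¹ O = O := perm_inv_fix hBO
  have hngu : (M.aM I O u)⁻¹ I = M.ng O I u := M.negb hOI hθG hθO hθI hspec hu1 hu2
  have hσG : (M.aM O I u)⁻¹ * M.aM I O u * (M.aM O I u)⁻¹ ∈ M.G :=
    mul_mem (mul_mem (inv_mem hAG) hBG) (inv_mem hAG)
  have hσO : ((M.aM O I u)⁻¹ * M.aM I O u * (M.aM O I u)⁻¹) O = I := by
    simp only [Perm.mul_apply]
    rw [← M.ng_def, ← hngu, Perm.apply_inv_self, hAiI]
  have hσI : ((M.aM O I u)⁻¹ * M.aM I O u * (M.aM O I u)⁻¹) I = O := by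
    simp only [Perm.mul_apply]
    rw [hAiI, hBI, hAiu]
  have hσu : ((M.aM O I u)⁻¹ * M.aM I O u * (M.aM O I u)⁻¹) u = M.ng O I u := by
    simp only [Perm.mul_apply]
    rw [hAiu, hBO, M.ng_def]
  set σ : Perm X := (M.aM O I u)⁻¹ * M.aM I O u * (M.aM O I u)⁻¹ with hσdef
  have heval1 : σ (M.aM O I u u) = (M.aM O I u)⁻¹ (M.aM I O u u) := by
    rw [hσdef]
    simp only [Perm.mul_apply, Perm.inv_apply_self]
  have hconj : σ * M.aM O I u * σ⁻¹ = (M.aM I O u)⁻¹ := by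
    rw [M.conj_aM hσG hOI hu2, hσO, hσI, hσu]
    exact (M.binv hOI hIO hθG hθO hθI hspec hu1 hu2).symm
  have heval2 : σ (M.aM O I u u) = (M.aM I O u)⁻¹ ((M.aM I O u)⁻¹ I) := by
    have h1 : σ (M.aM O I u u) = (σ * M.aM O I u * σ⁻¹) (σ u) := by
      simp only [Perm.mul_apply, Perm.inv_apply_self]
    rw [h1, hconj, hσu, ← hngu]
  have hmain : (M.aM O I u)⁻¹ (M.aM I O u u) = (M.aM I O u)⁻¹ ((M.aM I O u)⁻¹ I) :=
    heval1.symm.trans heval2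
  have hθiG : θ⁻¹ ∈ M.G := inv_mem hθG
  have hθiO : θ⁻¹ O = I := by rw [← hθI, Perm.inv_apply_self]
  have hθiI : θ⁻¹ I = O := by rw [← hθO, Perm.inv_apply_self]
  obtain ⟨hu'1, hu'2⟩ := M.unit_map hθiG hθiO hθiI hu1 hu2
  have hBform : M.aM I O u = θ * M.aM O I (θ⁻¹ u) * θ⁻¹ :=
    M.bform hOI hθG hθO hθI hu1 hu2
  have hθs' : θ (M.aM O I (θ⁻¹ u) (θ⁻¹ u)) = M.aM I O u u := by
    rw [hBform]
    simp only [Perm.mul_apply, Perm.inv_apply_self]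
  have hs'2 : ¬M.r (M.aM O I (θ⁻¹ u) (θ⁻¹ u)) I := by
    intro h
    have h' : M.r (M.aM O I (θ⁻¹ u) (θ⁻¹ u)) (M.aM O I (θ⁻¹ u) I) := by
      rw [M.aM_fix hOI hu'2]; exact h
    exact hu'2 ((M.presG (M.aM_G hOI hu'2) _ _).mp h')
  have hs'1 : ¬M.r (M.aM O I (θ⁻¹ u) (θ⁻¹ u)) O := by
    intro h
    have h' := (M.presG hθG _ _).mpr h
    rw [hθs', hθO] at h'
    exact hv2 h'
  have haMs' : M.aM O I (M.aM O I (θ⁻¹ u) (θ⁻¹ u)) = M.aM O I (θ⁻¹ u) * M.aM O I (θ⁻¹ u) := by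
    symm
    apply M.aM_eq hOI hs'2 (mul_mem (M.aM_mem hOI hu'2) (M.aM_mem hOI hu'2))
    rw [Perm.mul_apply, M.aM_apply hOI hu'2]
  have hodd : (M.aM I O u)⁻¹ ((M.aM I O u)⁻¹ I) = M.ng O I (M.aM I O u u) := by
    have hrw : (θ * M.aM O I (θ⁻¹ u) * θ⁻¹)⁻¹ = θ * (M.aM O I (θ⁻¹ u))⁻¹ * θ⁻¹ := by
      simp [mul_inv_rev, mul_assoc]
    rw [hBform, hrw]
    simp only [Perm.mul_apply, Perm.inv_apply_self]
    rw [hθiI]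
    have h1 : (M.aM O I (θ⁻¹ u))⁻¹ ((M.aM O I (θ⁻¹ u))⁻¹ O)
        = M.ng O I (M.aM O I (θ⁻¹ u) (θ⁻¹ u)) := by
      rw [M.ng_def, haMs', mul_inv_rev, Perm.mul_apply]
    rw [h1, hspec _ hs'1 hs'2, hθs']
  have hfinal : (M.aM O I u)⁻¹ (M.aM I O u u) = (M.aM O I (M.aM I O u u))⁻¹ O :=
    hmain.trans hodd
  have hCO : M.aM O I (M.aM I O u u) O = M.aM I O u u := M.aM_apply hOI hv2
  have hCiv : (M.aM O I (M.aM I O u u))⁻¹ (M.aM I O u u) = O := perm_inv_apply hCO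
  have hkmem : (M.aM O I (M.aM I O u u))⁻¹ * M.aM O I u * (M.aM O I (M.aM I O u u))⁻¹
      ∈ M.U I :=
    mul_mem (mul_mem (inv_mem (M.aM_mem hOI hv2)) (M.aM_mem hOI hu2))
      (inv_mem (M.aM_mem hOI hv2))
  have hkO : ((M.aM O I (M.aM I O u u))⁻¹ * M.aM O I u * (M.aM O I (M.aM I O u u))⁻¹) O
      = O := by
    simp only [Perm.mul_apply]
    rw [← hfinal, Perm.apply_inv_self, hCiv]
  have hk1 : (M.aM O I (M.aM I O u u))⁻¹ * M.aM O I u * (M.aM O I (M.aM I O u u))⁻¹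
      = 1 :=
    (M.lm2_trans I O O hOI hOI).unique ⟨hkmem, hkO⟩ ⟨one_mem _, Perm.one_apply O⟩
  have hAeq : M.aM O I u = M.aM O I (M.aM I O u u) * M.aM O I (M.aM I O u u) := by
    calc M.aM O I u
        = M.aM O I (M.aM I O u u) *
          ((M.aM O I (M.aM I O u u))⁻¹ * M.aM O I u * (M.aM O I (M.aM I O u u))⁻¹) *
          M.aM O I (M.aM I O u u) := by group
      _ = M.aM O I (M.aM I O u u) * 1 * M.aM O I (M.aM I O u u) := by rw [hk1]
      _ = M.aM O I (M.aM I O u u) * M.aM O I (M.aM I O u u) := by group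
  calc M.aM O I (M.aM I O u u) (M.aM I O u u)
      = (M.aM O I (M.aM I O u u) * M.aM O I (M.aM I O u u)) O := by
        rw [Perm.mul_apply, hCO]
    _ = M.aM O I u O := by rw [← hAeq]
    _ = u := hAO

end Gen

end LocalMoufangSet

/-- 2-divisibility facts in a special local Moufang set, for a
unit `x` such that `x·2 = x·α_x = α x` is also a unit.  Here `y·2 = b y` for the
α-map `b` of `y`. -/
theorem stmt17 {X : Type*} (M : LocalMoufangSet X) (o ι : X) (h0 : ¬ M.r o ι)
    (e : X) (he : M.IsUnitPt o ι e)
    (τ : Equiv.Perm X) (hτ : M.IsMuMap o ι e τ)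
    (hsp : M.Special o ι τ)
    (x : X) (hx : M.IsUnitPt o ι x)
    (α : Equiv.Perm X) (hαU : α ∈ M.U ι) (hαo : α o = x)
    (h2 : M.IsUnitPt o ι (α x)) :
    -- (1) there is a unique y with y·2 = x
    (∃! y : X, ¬ M.r y ι ∧ ∃ b ∈ M.U ι, b o = y ∧ b y = x) ∧
    -- (2) (xτ)·2 ≁ 0
    (∀ c ∈ M.U ι, c o = τ x → ¬ M.r (c (τ x)) o) ∧
    -- (3) ((x·2)τ)·2 = xτ
    (∀ d ∈ M.U ι, d o = τ (α x) → d (τ (α x)) = τ x) := by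
  obtain ⟨hx1, hx2⟩ := hx
  obtain ⟨hs1, hs2⟩ := h2
  obtain ⟨τo, τι, aa, haU, hao, gg, hgU, hh, hhU, hτeq⟩ := hτ
  have hιo : ¬ M.r ι o := fun hcon => h0 (M.rsymm hcon)
  have hτG : τ ∈ M.G := by
    rw [hτeq]
    exact mul_mem (mul_mem (M.U_le_G o hhU) (M.U_le_G ι haU)) (M.U_le_G o hgU)
  have hτiG : τ⁻¹ ∈ M.G := inv_mem hτG
  have hτio : τ⁻¹ o = ι := by rw [← τι, Equiv.Perm.inv_apply_self]
  have hτiι : τ⁻¹ ι = o := by rw [← τo, Equiv.Perm.inv_apply_self]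
  have hτspec : ∀ z : X, ¬M.r z o → ¬M.r z ι → τ (M.ng o ι z) = M.ng o ι (τ z) := by
    intro z hz1 hz2
    have hτz2 : ¬ M.r (τ z) ι := (M.unit_map hτG τo τι hz1 hz2).2
    have hthis := hsp z ⟨hz1, hz2⟩ (M.aM o ι z) (M.aM_mem h0 hz2) (M.aM_apply h0 hz2)
      (M.aM o ι (τ z)) (M.aM_mem h0 hτz2) (M.aM_apply h0 hτz2)
    rw [M.ng_def, M.ng_def]
    exact hthis
  have hτispec : ∀ z : X, ¬M.r z o → ¬M.r z ι → τ⁻¹ (M.ng o ι z) = M.ng o ι (τ⁻¹ z) := by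
    intro z hz1 hz2
    obtain ⟨hz'1, hz'2⟩ := M.unit_map hτiG hτio hτiι hz1 hz2
    have h1 := hτspec (τ⁻¹ z) hz'1 hz'2
    rw [Equiv.Perm.apply_inv_self] at h1
    rw [← h1, Equiv.Perm.inv_apply_self]
  have hmspec : ∀ z : X, ¬M.r z ι → ¬M.r z o → τ (M.ng ι o z) = M.ng ι o (τ z) := by
    intro z hz1 hz2
    obtain ⟨htz1, htz2⟩ := M.unit_map hτG τo τι hz2 hz1
    have e1 : M.ng ι o z = M.ng o ι z := by
      rw [M.ng_def]
      exact M.negb h0 hτG τo τι hτspec hz2 hz1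
    have e2 : M.ng ι o (τ z) = M.ng o ι (τ z) := by
      rw [M.ng_def]
      exact M.negb h0 hτG τo τι hτspec htz1 htz2
    rw [e1, e2]
    exact hτspec z hz2 hz1
  have hα : α = M.aM o ι x := M.aM_eq h0 hx2 hαU hαo
  have hsx : M.aM o ι x x = α x := by rw [hα]
  have hs1' : ¬ M.r (M.aM o ι x x) o := by rw [hsx]; exact hs1
  have part2 : ∀ c ∈ M.U ι, c o = τ x → ¬ M.r (c (τ x)) o := by
    intro c hcU hco
    have hτx2 : ¬ M.r (τ x) ι := (M.unit_map hτG τo τι hx1 hx2).2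
    have hc : c = M.aM o ι (τ x) := M.aM_eq h0 hτx2 hcU hco
    rw [hc]
    exact (M.two_gen h0 hιo hτG τo τι hτspec hx1 hx2 hs1').1
  have part3 : ∀ d ∈ M.U ι, d o = τ (α x) → d (τ (α x)) = τ x := by
    intro d hdU hdo
    have hτs2 : ¬ M.r (τ (α x)) ι := (M.unit_map hτG τo τι hs1 hs2).2
    have hd : d = M.aM o ι (τ (α x)) := M.aM_eq h0 hτs2 hdU hdo
    obtain ⟨hτx1, hτx2⟩ := M.unit_map hτG τo τι hx1 hx2
    have hbτx : M.aM ι o (τ x) = τ * M.aM o ι x * τ⁻¹ := by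
      have hcj := M.conj_aM hτG h0 hx2
      rw [τo, τι] at hcj
      exact hcj.symm
    have hveq : M.aM ι o (τ x) (τ x) = τ (α x) := by
      rw [hbτx]
      simp only [Equiv.Perm.mul_apply, Equiv.Perm.inv_apply_self]
      rw [hsx]
    have hv2 : ¬ M.r (M.aM ι o (τ x) (τ x)) ι := by rw [hveq]; exact hτs2
    have hml := M.ML_gen h0 hιo hτG τo τι hτspec hτx1 hτx2 hv2
    rw [hveq] at hml
    rw [hd]
    exact hml
  have part1 : ∃! y : X, ¬ M.r y ι ∧ ∃ b ∈ M.U ι, b o = y ∧ b y = x := by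
    obtain ⟨hW1, hW2⟩ := M.two_gen h0 hιo hτiG hτio hτiι hτispec hx1 hx2 hs1'
    have hbx : M.aM ι o x = τ * M.aM o ι (τ⁻¹ x) * τ⁻¹ := by
      have hcj := M.conj_aM hτG h0 (M.unit_map hτiG hτio hτiι hx1 hx2).2
      rw [τo, τι, Equiv.Perm.apply_inv_self] at hcj
      exact hcj.symm
    have hyW : M.aM ι o x x = τ (M.aM o ι (τ⁻¹ x) (τ⁻¹ x)) := by
      rw [hbx]
      simp only [Equiv.Perm.mul_apply]
    have hyv : ¬ M.r (M.aM ι o x x) ι := by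
      rw [hyW]
      intro hcon
      have hcon2 : M.r (τ (M.aM o ι (τ⁻¹ x) (τ⁻¹ x))) (τ o) := by rw [τo]; exact hcon
      exact hW1 ((M.presG hτG _ _).mp hcon2)
    have hex := M.ML_gen h0 hιo hτG τo τι hτspec hx1 hx2 hyv
    refine ⟨M.aM ι o x x, ⟨hyv, M.aM o ι (M.aM ι o x x), M.aM_mem h0 hyv,
      M.aM_apply h0 hyv, hex⟩, ?_⟩
    rintro y' ⟨hy'ι, b', hb'U, hb'o, hb'x⟩
    have hb' : b' = M.aM o ι y' := M.aM_eq h0 hy'ι hb'U hb'o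
    have hy'o : ¬ M.r y' o := by
      intro hcon
      have h1 := (M.presG (M.U_le_G ι hb'U) y' o).mpr hcon
      rw [hb'x, hb'o] at h1
      exact hx1 (M.requiv.trans h1 hcon)
    have hveq' : M.aM o ι y' y' = x := by rw [← hb']; exact hb'x
    have hv2' : ¬ M.r (M.aM o ι y' y') o := by rw [hveq']; exact hx1
    have hml' := M.ML_gen hιo h0 hτG τι τo hmspec hy'ι hy'o hv2'
    rw [hveq'] at hml'
    exact hml'.symm
  exact ⟨part1, part2, part3⟩
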